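/- arXiv:2107.01316 — 2 statements merged into one kernel-verified Lean document; each statement's English description precedes it below -/
import Mathlib

section
/- Define S_m(n) = Σ_{k=0}^{n/2^{m+1}} r_{m-1}(2^m·k) for m ≥ 1 and n ≡ 0 (mod 2^{m+1}). Then S_m satisfies the same recursion as r_m: for every integer n' ≥ 0, S_m(2^{m+2}·n' + 2^{m+1}) = S_m(2^{m+2}·n') + Σ_{j=0}^{⌊m/2⌋} C(m+1, 2j+1) · S_m((2^{m+2}·n' + 2^{m+1} − (2j+1)·2^{m+1})/2). -/
/-- The integer partitioned by the binary partition `α`, where `α i` is the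
number of parts equal to `2 ^ i` (so `α i` is the `α_{i+1}` of the paper). -/
def binWeight (α : ℕ →₀ ℕ) : ℕ := α.sum fun i a => a * 2 ^ i

/-- `Pm m n` is the set of binary partitions of `n` satisfying the divisibility
conditions `2 ^ (m + 2 - i) ∣ α_i` for `1 ≤ i ≤ m + 1` (written here with the
index shifted down by one).  For `n < 0` the set is empty. -/
def Pm (m : ℕ) (n : ℤ) : Set (ℕ →₀ ℕ) :=
  {α | (binWeight α : ℤ) = n ∧ ∀ i ≤ m, 2 ^ (m + 1 - i) ∣ α i}

/-- `r m n` is the number of binary partitions of `n` satisfying the divisibility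
conditions `2 ^ (m + 2 - i) ∣ α_i` for `1 ≤ i ≤ m + 1`. -/
noncomputable def r (m : ℕ) (n : ℤ) : ℕ := Nat.card (Pm m n)

/-- `S m x = Σ_{k=0}^{x/2^(m+1)} r_{m-1}(2^m k)` when `x` is a nonnegative
multiple of `2^(m+1)`, and `S m x = 0` otherwise. -/
noncomputable def S (m : ℕ) (x : ℤ) : ℕ :=
  if 0 ≤ x ∧ (2 : ℤ) ^ (m + 1) ∣ x then
    ∑ k ∈ Finset.range ((x / 2 ^ (m + 1)).toNat + 1), r (m - 1) (2 ^ m * (k : ℤ))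
  else 0

set_option linter.unnecessarySeqFocus false

namespace Aux17


lemma binWeight_add (f g : ℕ →₀ ℕ) : binWeight (f + g) = binWeight f + binWeight g := by
  unfold binWeight
  exact Finsupp.sum_add_index (by simp) (by intro a _ b c; ring)

lemma binWeight_single (i c : ℕ) : binWeight (Finsupp.single i c) = c * 2 ^ i := by
  unfold binWeight
  exact Finsupp.sum_single_index (by simp)

lemma binWeight_sum {s : Finset γ} (f : γ → (ℕ →₀ ℕ)) :
    binWeight (∑ j ∈ s, f j) = ∑ j ∈ s, binWeight (f j) := by
  classical
  induction s using Finset.cons_induction with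
  | empty => simp [binWeight]
  | cons a s ha ih => rw [Finset.sum_cons, Finset.sum_cons, binWeight_add, ih]

noncomputable def tailN (M : ℕ) (α : ℕ →₀ ℕ) : ℕ →₀ ℕ :=
  Finsupp.comapDomain (· + M) α (fun a _ b _ h => by simpa using h)

lemma tailN_apply (M : ℕ) (α : ℕ →₀ ℕ) (j : ℕ) : tailN M α j = α (j + M) := rfl

noncomputable def consN (M : ℕ) (x : Fin M → ℕ) (δ : ℕ →₀ ℕ) : ℕ →₀ ℕ :=
  (∑ i : Fin M, Finsupp.single (i : ℕ) (x i)) + Finsupp.mapDomain (· + M) δ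

lemma consN_apply_lt (M : ℕ) (x : Fin M → ℕ) (δ : ℕ →₀ ℕ) (i : Fin M) :
    consN M x δ (i : ℕ) = x i := by
  unfold consN
  rw [Finsupp.add_apply, Finsupp.finset_sum_apply]
  rw [Finset.sum_eq_single i]
  · rw [Finsupp.single_eq_same, Finsupp.mapDomain_notin_range, add_zero]
    rintro ⟨a, ha⟩
    simp only at ha
    have := i.isLt
    omega
  · intro b _ hb
    exact Finsupp.single_eq_of_ne' (fun h => hb (Fin.val_injective h))
  · simp
lemma consN_apply_ge (M : ℕ) (x : Fin M → ℕ) (δ : ℕ →₀ ℕ) (j : ℕ) :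
    consN M x δ (j + M) = δ j := by
  unfold consN
  rw [Finsupp.add_apply, Finsupp.finset_sum_apply]
  rw [Finset.sum_eq_zero, zero_add, Finsupp.mapDomain_apply (fun a b h => by omega)]
  intro i _
  exact Finsupp.single_eq_of_ne (by have := i.isLt; omega)

lemma binWeight_mapDomain (M : ℕ) (δ : ℕ →₀ ℕ) :
    binWeight (Finsupp.mapDomain (· + M) δ) = 2 ^ M * binWeight δ := by
  unfold binWeight
  rw [Finsupp.sum_mapDomain_index (by simp) (by intro a b c; ring)]
  rw [Finsupp.mul_sum]
  exact Finsupp.sum_congr (by intro a _; rw [pow_add]; ring)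

lemma binWeight_consN (M : ℕ) (x : Fin M → ℕ) (δ : ℕ →₀ ℕ) :
    binWeight (consN M x δ) = (∑ i : Fin M, x i * 2 ^ (i : ℕ)) + 2 ^ M * binWeight δ := by
  unfold consN
  rw [binWeight_add, binWeight_sum, binWeight_mapDomain]
  simp [binWeight_single]

lemma tailN_consN (M : ℕ) (x : Fin M → ℕ) (δ : ℕ →₀ ℕ) : tailN M (consN M x δ) = δ := by
  ext j
  rw [tailN_apply, consN_apply_ge]

lemma consN_eta (M : ℕ) (α : ℕ →₀ ℕ) :
    consN M (fun i => α (i : ℕ)) (tailN M α) = α := by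
  ext j
  by_cases h : j < M
  · exact consN_apply_lt M _ _ ⟨j, h⟩
  · have hj : j = (j - M) + M := by omega
    rw [hj, consN_apply_ge, tailN_apply]

lemma binWeight_split (M : ℕ) (α : ℕ →₀ ℕ) :
    binWeight α = (∑ i : Fin M, α (i : ℕ) * 2 ^ (i : ℕ)) + 2 ^ M * binWeight (tailN M α) := by
  conv_lhs => rw [← consN_eta M α]
  rw [binWeight_consN]




-- chunk 2
def Wset (a n : ℕ) : Set ((Fin a → ℕ) × (ℕ →₀ ℕ)) :=
  {p | (∑ i, p.1 i) + binWeight p.2 = n}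

noncomputable def w (a n : ℕ) : ℕ := Nat.card (Wset a n)

lemma binWeight_apply_le (α : ℕ →₀ ℕ) (i : ℕ) : α i * 2 ^ i ≤ binWeight α := by
  by_cases h : i ∈ α.support
  · exact Finset.single_le_sum (f := fun j => α j * 2 ^ j) (fun _ _ => Nat.zero_le _) h
  · simp [Finsupp.notMem_support_iff.mp h]

lemma apply_le_binWeight (α : ℕ →₀ ℕ) (i : ℕ) : α i ≤ binWeight α :=
  le_trans (Nat.le_mul_of_pos_right _ (Nat.two_pow_pos i)) (binWeight_apply_le α i)

lemma apply_eq_zero_of_lt (α : ℕ →₀ ℕ) {n i : ℕ} (h : binWeight α ≤ n) (hi : n < i) :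
    α i = 0 := by
  by_contra hne
  have h1 : 1 ≤ α i := Nat.one_le_iff_ne_zero.mpr hne
  have h2 : 2 ^ i ≤ α i * 2 ^ i := Nat.le_mul_of_pos_left _ h1
  have h3 := binWeight_apply_le α i
  have h4 : i < 2 ^ i := Nat.lt_two_pow_self
  omega

instance Wset_finite (a n : ℕ) : Finite (Wset a n) := by
  have hx : ∀ (p : Wset a n) (i : Fin a), p.1.1 i < n + 1 := by
    intro p i
    have h : (∑ i, p.1.1 i) + binWeight p.1.2 = n := p.2
    have h5 : p.1.1 i ≤ ∑ j, p.1.1 j :=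
      Finset.single_le_sum (fun _ _ => Nat.zero_le _) (Finset.mem_univ i)
    omega
  have hd : ∀ (p : Wset a n) (i : ℕ), p.1.2 i < n + 1 := by
    intro p i
    have h : (∑ i, p.1.1 i) + binWeight p.1.2 = n := p.2
    have := apply_le_binWeight p.1.2 i
    omega
  set F : Wset a n → (Fin a → Fin (n+1)) × (Fin (n+1) → Fin (n+1)) := fun p =>
    (fun i => ⟨p.1.1 i, hx p i⟩, fun i => ⟨p.1.2 (i : ℕ), hd p (i : ℕ)⟩) with hF
  apply Finite.of_injective F
  rintro ⟨⟨x, δ⟩, hp⟩ ⟨⟨y, ε⟩, hq⟩ h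
  rw [Prod.ext_iff] at h
  obtain ⟨h1, h2⟩ := h
  have hbp : binWeight δ ≤ n := by have : (∑ i, x i) + binWeight δ = n := hp; omega
  have hbq : binWeight ε ≤ n := by have : (∑ i, y i) + binWeight ε = n := hq; omega
  apply Subtype.ext
  simp only [Prod.mk.injEq]
  constructor
  · funext i
    have := congrFun h1 i
    simpa [hF, Fin.ext_iff] using this
  · ext j
    by_cases hj : j < n + 1
    · have := congrFun h2 ⟨j, hj⟩
      simpa [hF, Fin.ext_iff] using this
    · rw [apply_eq_zero_of_lt δ hbp (by omega), apply_eq_zero_of_lt ε hbq (by omega)]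

noncomputable def equivA (m k : ℕ) : Pm m ((2:ℤ) ^ (m+1) * k) ≃ Wset (m+1) k where
  toFun p := ⟨(fun i => p.1 (i : ℕ) / 2 ^ (m + 1 - (i : ℕ)), tailN (m+1) p.1), by
    obtain ⟨hw, hdvd⟩ := p.2
    have hw' : binWeight p.1 = 2 ^ (m+1) * k := by exact_mod_cast hw
    have hsplit := binWeight_split (m+1) p.1
    have hterm : ∀ i : Fin (m+1), p.1 (i : ℕ) * 2 ^ (i : ℕ)
        = 2 ^ (m+1) * (p.1 (i : ℕ) / 2 ^ (m + 1 - (i : ℕ))) := by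
      intro i
      obtain ⟨c, hc⟩ := hdvd (i : ℕ) (by have := i.isLt; omega)
      have hip : (m + 1 - (i : ℕ)) + (i : ℕ) = m + 1 := by have := i.isLt; omega
      rw [hc, Nat.mul_div_cancel_left c (Nat.two_pow_pos _),
        mul_right_comm, ← pow_add, hip]
    rw [Finset.sum_congr rfl (fun i _ => hterm i), ← Finset.mul_sum, ← Nat.mul_add] at hsplit
    show (∑ i : Fin (m+1), p.1 (i : ℕ) / 2 ^ (m + 1 - (i : ℕ))) + binWeight (tailN (m+1) p.1) = k
    have hpos : 0 < 2 ^ (m+1) := Nat.two_pow_pos _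
    exact Nat.eq_of_mul_eq_mul_left hpos (by omega)⟩
  invFun q := ⟨consN (m+1) (fun i => 2 ^ (m + 1 - (i : ℕ)) * q.1.1 i) q.1.2, by
    constructor
    · have hq : (∑ i, q.1.1 i) + binWeight q.1.2 = k := q.2
      rw [binWeight_consN]
      have hterm : ∀ i : Fin (m+1), 2 ^ (m + 1 - (i : ℕ)) * q.1.1 i * 2 ^ (i : ℕ)
          = 2 ^ (m+1) * q.1.1 i := by
        intro i
        have hip : (m + 1 - (i : ℕ)) + (i : ℕ) = m + 1 := by have := i.isLt; omega
        rw [mul_right_comm, ← pow_add, hip]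
      rw [Finset.sum_congr rfl (fun i _ => hterm i), ← Finset.mul_sum, ← Nat.mul_add, hq]
      push_cast
      ring
    · intro i hi
      have hlt : i < m + 1 := by omega
      have := consN_apply_lt (m+1) (fun i => 2 ^ (m + 1 - (i : ℕ)) * q.1.1 i) q.1.2 ⟨i, hlt⟩
      rw [this]
      exact Dvd.intro _ rfl⟩
  left_inv p := by
    obtain ⟨α, hw, hdvd⟩ := p
    apply Subtype.ext
    show consN (m+1) _ (tailN (m+1) α) = α
    have hfun : (fun i : Fin (m+1) => 2 ^ (m + 1 - (i : ℕ)) * (α (i : ℕ) / 2 ^ (m + 1 - (i : ℕ))))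
        = fun i : Fin (m+1) => α (i : ℕ) := by
      funext i
      exact Nat.mul_div_cancel' (hdvd (i : ℕ) (by have := i.isLt; omega)) 
    rw [hfun, consN_eta]
  right_inv q := by
    obtain ⟨⟨x, δ⟩, hq⟩ := q
    apply Subtype.ext
    simp only [Prod.mk.injEq]
    constructor
    · funext i
      rw [consN_apply_lt]
      exact Nat.mul_div_cancel_left _ (Nat.two_pow_pos _)
    · exact tailN_consN _ _ _

lemma r_eq_w (m k : ℕ) : r m ((2:ℤ) ^ (m+1) * k) = w (m+1) k :=
  Nat.card_congr (equivA m k)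








noncomputable def equivB (a n : ℕ) : Wset (a+1) n ≃
    {q : Fin (n+1) × ((Fin a → ℕ) × (ℕ →₀ ℕ)) //
      (∑ i, q.2.1 i) + binWeight q.2.2 = (q.1 : ℕ)} where
  toFun p := ⟨(⟨(∑ i : Fin a, p.1.1 i.castSucc) + binWeight p.1.2, by
      have h : (∑ i, p.1.1 i) + binWeight p.1.2 = n := p.2
      rw [Fin.sum_univ_castSucc] at h
      omega⟩,
      ((fun i => p.1.1 i.castSucc), p.1.2)), rfl⟩
  invFun q := ⟨(Fin.snoc q.1.2.1 (n - (q.1.1 : ℕ)), q.1.2.2), by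
      show (∑ i, _) + _ = n
      rw [Fin.sum_univ_castSucc]
      have h := q.2
      have hlt := q.1.1.isLt
      simp only [Fin.snoc_castSucc, Fin.snoc_last]
      omega⟩
  left_inv p := by
    obtain ⟨⟨x, δ⟩, hp⟩ := p
    apply Subtype.ext
    simp only [Prod.mk.injEq]
    refine ⟨?_, trivial⟩
    have h : (∑ i, x i) + binWeight δ = n := hp
    rw [Fin.sum_univ_castSucc] at h
    funext i
    refine Fin.lastCases ?_ (fun j => ?_) i
    · rw [Fin.snoc_last]
      omega
    · rw [Fin.snoc_castSucc]
  right_inv q := by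
    obtain ⟨⟨k, y, δ⟩, hq⟩ := q
    apply Subtype.ext
    simp only [Prod.mk.injEq, Fin.snoc_castSucc]
    refine ⟨Fin.ext ?_, trivial⟩
    exact hq

lemma w_succ (a n : ℕ) : w (a+1) n = ∑ k ∈ Finset.range (n+1), w a k := by
  classical
  have e1 := (equivB a n).trans (Equiv.subtypeProdEquivSigmaSubtype
    (fun (k : Fin (n+1)) (q : (Fin a → ℕ) × (ℕ →₀ ℕ)) =>
      (∑ i, q.1 i) + binWeight q.2 = (k : ℕ)))
  have efib : ∀ k : Fin (n+1),
      {q : (Fin a → ℕ) × (ℕ →₀ ℕ) // (∑ i, q.1 i) + binWeight q.2 = (k : ℕ)}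
      ≃ Wset a (k : ℕ) := fun k => Equiv.subtypeEquivRight (fun _ => Iff.rfl)
  haveI : ∀ k : Fin (n+1), Finite
      {q : (Fin a → ℕ) × (ℕ →₀ ℕ) // (∑ i, q.1 i) + binWeight q.2 = (k : ℕ)} :=
    fun k => Finite.of_equiv _ (efib k).symm
  haveI : ∀ k : Fin (n+1), Fintype
      {q : (Fin a → ℕ) × (ℕ →₀ ℕ) // (∑ i, q.1 i) + binWeight q.2 = (k : ℕ)} :=
    fun k => Fintype.ofFinite _
  rw [show w (a+1) n = Nat.card (Wset (a+1) n) from rfl, Nat.card_congr e1,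
    Nat.card_eq_fintype_card, Fintype.card_sigma]
  rw [← Fin.sum_univ_eq_sum_range (fun k => w a k) (n+1)]
  refine Finset.sum_congr rfl (fun k _ => ?_)
  rw [← Nat.card_eq_fintype_card, Nat.card_congr (efib k)]
  rfl

-- chunk 3
lemma binWeight_peel (γ : ℕ →₀ ℕ) : binWeight γ = γ 0 + 2 * binWeight (tailN 1 γ) := by
  have := binWeight_split 1 γ
  simpa using this

/-- odd-part indicator set of a tuple -/
def oddSet {M : ℕ} (v : Fin M → ℕ) : Finset (Fin M) :=
  Finset.univ.filter (fun i => v i % 2 = 1)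

lemma sum_parity {M : ℕ} (v : Fin M → ℕ) :
    ∑ i, v i = 2 * (∑ i, v i / 2) + (oddSet v).card := by
  rw [oddSet, Finset.card_filter, Finset.mul_sum, ← Finset.sum_add_distrib]
  refine Finset.sum_congr rfl (fun i _ => ?_)
  by_cases h : v i % 2 = 1 <;> simp [h] <;> omega

def pv {M : ℕ} (e : Finset (Fin M)) (y : Fin M → ℕ) : Fin M → ℕ :=
  fun i => 2 * y i + (if i ∈ e then 1 else 0)

lemma pv_div {M : ℕ} (e : Finset (Fin M)) (y : Fin M → ℕ) (i : Fin M) :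
    pv e y i / 2 = y i := by
  unfold pv; by_cases h : i ∈ e <;> simp [h] <;> omega

lemma oddSet_pv {M : ℕ} (e : Finset (Fin M)) (y : Fin M → ℕ) : oddSet (pv e y) = e := by
  ext i
  simp only [oddSet, Finset.mem_filter, Finset.mem_univ, true_and, pv]
  by_cases h : i ∈ e <;> simp [h] <;> omega

lemma sum_pv {M : ℕ} (e : Finset (Fin M)) (y : Fin M → ℕ) :
    ∑ i, pv e y i = 2 * (∑ i, y i) + e.card := by
  have h : ∑ i, pv e y i / 2 = ∑ i, y i := Finset.sum_congr rfl (fun i _ => pv_div e y i)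
  rw [sum_parity (pv e y), oddSet_pv, h]

lemma pv_eta {M : ℕ} (v : Fin M → ℕ) : pv (oddSet v) (fun i => v i / 2) = v := by
  funext i
  simp only [pv, oddSet, Finset.mem_filter, Finset.mem_univ, true_and]
  by_cases h : v i % 2 = 1 <;> simp [h] <;> omega

lemma snocEta {M : ℕ} (v : Fin (M+1) → ℕ) :
    Fin.snoc (fun i : Fin M => v i.castSucc) (v (Fin.last M)) = v := by
  funext i
  refine Fin.lastCases ?_ (fun j => ?_) i
  · rw [Fin.snoc_last]
  · rw [Fin.snoc_castSucc]

lemma fin1_const (γ : ℕ →₀ ℕ) :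
    (fun _ : Fin 1 => γ 0) = (fun i : Fin 1 => γ (i : ℕ)) := by
  funext i
  have : (i : ℕ) = 0 := by omega
  rw [this]

/-- key fact for the toFun direction -/
lemma keyC {m n : ℕ} (x : Fin m → ℕ) (γ : ℕ →₀ ℕ)
    (hp : (∑ i, x i) + binWeight γ = 2*n+1) :
    2 * (∑ i, (Fin.snoc x (γ 0) : Fin (m+1) → ℕ) i / 2)
      + (oddSet (Fin.snoc x (γ 0) : Fin (m+1) → ℕ)).card
      + 2 * binWeight (tailN 1 γ) = 2*n+1 := by
  have h1 := binWeight_peel γ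
  have h2 := sum_parity (Fin.snoc x (γ 0) : Fin (m+1) → ℕ)
  have h3 : ∑ i, (Fin.snoc x (γ 0) : Fin (m+1) → ℕ) i = (∑ i, x i) + γ 0 := by
    rw [Fin.sum_univ_castSucc]
    simp
  omega

noncomputable def equivC (m n : ℕ) : Wset m (2*n+1) ≃
    {q : Fin (n+1) × (Finset (Fin (m+1)) × ((Fin (m+1) → ℕ) × (ℕ →₀ ℕ))) //
      q.2.1.card = 2 * (q.1 : ℕ) + 1 ∧
      (∑ i, q.2.2.1 i) + binWeight q.2.2.2 = n - (q.1 : ℕ)} where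
  toFun p :=
    ⟨(⟨(oddSet (Fin.snoc p.1.1 (p.1.2 0) : Fin (m+1) → ℕ)).card / 2, by
        have hp : (∑ i, p.1.1 i) + binWeight p.1.2 = 2*n+1 := p.2
        have h := keyC p.1.1 p.1.2 hp
        omega⟩,
      (oddSet (Fin.snoc p.1.1 (p.1.2 0) : Fin (m+1) → ℕ),
        ((fun i => (Fin.snoc p.1.1 (p.1.2 0) : Fin (m+1) → ℕ) i / 2), tailN 1 p.1.2))), by
      have hp : (∑ i, p.1.1 i) + binWeight p.1.2 = 2*n+1 := p.2
      have h := keyC p.1.1 p.1.2 hp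
      constructor
      · show (oddSet _).card = 2 * ((oddSet _).card / 2) + 1
        omega
      · show (∑ i, (Fin.snoc p.1.1 (p.1.2 0) : Fin (m+1) → ℕ) i / 2)
            + binWeight (tailN 1 p.1.2) = n - (oddSet _).card / 2
        omega⟩
  invFun q :=
    ⟨((fun i : Fin m => pv q.1.2.1 q.1.2.2.1 i.castSucc),
      consN 1 (fun _ => pv q.1.2.1 q.1.2.2.1 (Fin.last m)) q.1.2.2.2), by
      obtain ⟨⟨j, e, y, δ⟩, hc, hs⟩ := q
      dsimp only at hc hs
      show (∑ i : Fin m, pv e y i.castSucc) + binWeight (consN 1 _ δ) = 2*n+1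
      rw [binWeight_consN]
      have h1 : (∑ i : Fin m, pv e y i.castSucc) + pv e y (Fin.last m)
          = ∑ i, pv e y i := (Fin.sum_univ_castSucc (pv e y)).symm
      have h2 := sum_pv e y
      have hj : (j : ℕ) ≤ n := by have := j.isLt; omega
      have hs' : (∑ i, y i) + binWeight δ = n - (j : ℕ) := hs
      have hc' : e.card = 2 * (j : ℕ) + 1 := hc
      simp only [Fin.sum_univ_one, Fin.val_zero, pow_zero, mul_one, pow_one]
      omega⟩
  left_inv p := by
    obtain ⟨⟨x, γ⟩, hp⟩ := p
    apply Subtype.ext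
    simp only [Prod.mk.injEq]
    have hv : (fun i : Fin (m+1) =>
        (Fin.snoc x (γ 0) : Fin (m+1) → ℕ) i / 2)
        = fun i => (Fin.snoc x (γ 0) : Fin (m+1) → ℕ) i / 2 := rfl
    constructor
    · funext i
      show pv (oddSet (Fin.snoc x (γ 0))) (fun i => (Fin.snoc x (γ 0) : Fin (m+1) → ℕ) i / 2)
          i.castSucc = x i
      rw [pv_eta]
      exact Fin.snoc_castSucc _ _ _
    · show consN 1 (fun _ => pv (oddSet (Fin.snoc x (γ 0)))
          (fun i => (Fin.snoc x (γ 0) : Fin (m+1) → ℕ) i / 2) (Fin.last m)) (tailN 1 γ) = γ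
      rw [pv_eta]
      have : (Fin.snoc x (γ 0) : Fin (m+1) → ℕ) (Fin.last m) = γ 0 := Fin.snoc_last _ _
      rw [this, fin1_const, consN_eta]
  right_inv q := by
    obtain ⟨⟨j, e, y, δ⟩, hc, hs⟩ := q
    dsimp only at hc hs
    apply Subtype.ext
    have hγ0 : consN 1 (fun _ => pv e y (Fin.last m)) δ 0 = pv e y (Fin.last m) := by
      have := consN_apply_lt 1 (fun _ => pv e y (Fin.last m)) δ 0
      simpa using this
    have hsnoc : (Fin.snoc (fun i : Fin m => pv e y i.castSucc)
        (consN 1 (fun _ => pv e y (Fin.last m)) δ 0) : Fin (m+1) → ℕ) = pv e y := by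
      rw [hγ0]
      exact snocEta (pv e y)
    simp only [Prod.mk.injEq]
    refine ⟨Fin.ext ?_, ?_, ?_, ?_⟩
    · show (oddSet _).card / 2 = (j : ℕ)
      rw [hsnoc, oddSet_pv]
      omega
    · show oddSet _ = e
      rw [hsnoc, oddSet_pv]
    · funext i
      show (Fin.snoc (fun i : Fin m => pv e y i.castSucc) _ : Fin (m+1) → ℕ) i / 2 = y i
      rw [hsnoc, pv_div]
    · exact tailN_consN _ _ _

lemma w_odd (m n : ℕ) : w m (2*n+1)
    = ∑ j ∈ Finset.range (n+1), (m+1).choose (2*j+1) * w (m+1) (n - j) := by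
  classical
  have e1 := (equivC m n).trans (Equiv.subtypeProdEquivSigmaSubtype
    (fun (j : Fin (n+1)) (q : Finset (Fin (m+1)) × ((Fin (m+1) → ℕ) × (ℕ →₀ ℕ))) =>
      q.1.card = 2 * (j : ℕ) + 1 ∧ (∑ i, q.2.1 i) + binWeight q.2.2 = n - (j : ℕ)))
  have efib : ∀ j : Fin (n+1),
      {q : Finset (Fin (m+1)) × ((Fin (m+1) → ℕ) × (ℕ →₀ ℕ)) //
        q.1.card = 2 * (j : ℕ) + 1 ∧ (∑ i, q.2.1 i) + binWeight q.2.2 = n - (j : ℕ)}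
      ≃ {e : Finset (Fin (m+1)) // e.card = 2 * (j : ℕ) + 1} × Wset (m+1) (n - (j : ℕ)) :=
    fun j => Equiv.subtypeProdEquivProd
      (p := fun e : Finset (Fin (m+1)) => e.card = 2 * (j : ℕ) + 1)
      (q := fun b : (Fin (m+1) → ℕ) × (ℕ →₀ ℕ) => (∑ i, b.1 i) + binWeight b.2 = n - (j : ℕ))
  haveI : ∀ j : Fin (n+1), Finite
      {q : Finset (Fin (m+1)) × ((Fin (m+1) → ℕ) × (ℕ →₀ ℕ)) //
        q.1.card = 2 * (j : ℕ) + 1 ∧ (∑ i, q.2.1 i) + binWeight q.2.2 = n - (j : ℕ)} :=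
    fun j => Finite.of_equiv _ (efib j).symm
  haveI hft : ∀ j : Fin (n+1), Fintype
      {q : Finset (Fin (m+1)) × ((Fin (m+1) → ℕ) × (ℕ →₀ ℕ)) //
        q.1.card = 2 * (j : ℕ) + 1 ∧ (∑ i, q.2.1 i) + binWeight q.2.2 = n - (j : ℕ)} :=
    fun j => Fintype.ofFinite _
  rw [show w m (2*n+1) = Nat.card (Wset m (2*n+1)) from rfl, Nat.card_congr e1,
    Nat.card_eq_fintype_card, Fintype.card_sigma]
  rw [← Fin.sum_univ_eq_sum_range (fun j => (m+1).choose (2*j+1) * w (m+1) (n - j)) (n+1)]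
  refine Finset.sum_congr rfl (fun j _ => ?_)
  rw [← Nat.card_eq_fintype_card, Nat.card_congr (efib j), Nat.card_prod]
  congr 1
  rw [Nat.card_eq_fintype_card, Fintype.card_finset_len]
  simp


lemma S_eval (m : ℕ) (hm : 1 ≤ m) (k : ℕ) :
    S m ((2:ℤ) ^ (m+1) * k) = w (m+1) k := by
  have hpos : (0:ℤ) < 2 ^ (m+1) := by positivity
  rw [S, if_pos ⟨by positivity, dvd_mul_right _ _⟩]
  rw [Int.mul_ediv_cancel_left _ (ne_of_gt hpos), Int.toNat_natCast]
  have hm1 : m - 1 + 1 = m := by omega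
  have hbody : ∀ k' : ℕ, r (m - 1) ((2:ℤ) ^ m * k') = w m k' := by
    intro k'
    have := r_eq_w (m - 1) k'
    rwa [hm1] at this
  rw [Finset.sum_congr rfl (fun k' _ => hbody k'), ← w_succ]

lemma S_neg (m : ℕ) {x : ℤ} (hx : x < 0) : S m x = 0 := by
  rw [S, if_neg]
  rintro ⟨h0, _⟩
  omega

end Aux17

open Aux17

theorem stmt17 (m : ℕ) (hm : 1 ≤ m) (n' : ℕ) :
    S m (2 ^ (m + 2) * n' + 2 ^ (m + 1)) =
      S m (2 ^ (m + 2) * n') +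
        ∑ j ∈ Finset.range (m / 2 + 1),
          (m + 1).choose (2 * j + 1) *
            S m ((2 ^ (m + 2) * (n' : ℤ) + 2 ^ (m + 1) - (2 * j + 1) * 2 ^ (m + 1)) / 2) := by
  have h2 : (0:ℤ) < 2 ^ (m+1) := by positivity
  have hL : S m (2 ^ (m + 2) * n' + 2 ^ (m + 1)) = w (m+1) (2*n'+1) := by
    rw [show ((2:ℤ) ^ (m + 2) * n' + 2 ^ (m + 1)) = (2:ℤ) ^ (m+1) * ((2*n'+1 : ℕ) : ℤ) by
      push_cast; ring]
    exact S_eval m hm _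
  have hR0 : S m (2 ^ (m + 2) * (n' : ℤ)) = w (m+1) (2*n') := by
    rw [show ((2:ℤ) ^ (m + 2) * n') = (2:ℤ) ^ (m+1) * ((2*n' : ℕ) : ℤ) by push_cast; ring]
    exact S_eval m hm _
  have hdiv : ∀ j : ℕ,
      ((2:ℤ) ^ (m + 2) * (n' : ℤ) + 2 ^ (m + 1) - (2 * j + 1) * 2 ^ (m + 1)) / 2
        = (2:ℤ) ^ (m+1) * ((n' : ℤ) - j) := by
    intro j
    rw [show ((2:ℤ) ^ (m + 2) * (n' : ℤ) + 2 ^ (m + 1) - (2 * j + 1) * 2 ^ (m + 1))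
        = 2 * ((2:ℤ) ^ (m+1) * ((n' : ℤ) - j)) by push_cast; ring]
    exact Int.mul_ediv_cancel_left _ two_ne_zero
  have hterm : ∀ j : ℕ, j ≤ n' →
      S m ((2:ℤ) ^ (m+1) * ((n' : ℤ) - j)) = w (m+1) (n' - j) := by
    intro j hj
    rw [show ((n' : ℤ) - j) = ((n' - j : ℕ) : ℤ) by omega]
    exact S_eval m hm _
  have hterm0 : ∀ j : ℕ, n' < j → S m ((2:ℤ) ^ (m+1) * ((n' : ℤ) - j)) = 0 := by
    intro j hj
    apply S_neg
    have hneg : (n' : ℤ) - j < 0 := by omega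
    exact mul_neg_of_pos_of_neg h2 hneg
  set N := max (n' + 1) (m / 2 + 1) with hN
  have hs1 : ∑ j ∈ Finset.range (m / 2 + 1),
      (m + 1).choose (2 * j + 1) *
        S m ((2 ^ (m + 2) * (n' : ℤ) + 2 ^ (m + 1) - (2 * j + 1) * 2 ^ (m + 1)) / 2)
      = ∑ j ∈ Finset.range N,
        (m + 1).choose (2 * j + 1) * S m ((2:ℤ) ^ (m+1) * ((n' : ℤ) - j)) := by
    rw [Finset.sum_congr rfl (fun j _ => by rw [hdiv j])]
    apply Finset.sum_subset
    · exact Finset.range_subset_range.mpr (le_max_right _ _)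
    · intro j _ hj
      rw [Finset.mem_range, not_lt] at hj
      have : m + 1 < 2 * j + 1 := by omega
      rw [Nat.choose_eq_zero_of_lt this, zero_mul]
  have hs2 : ∑ j ∈ Finset.range (n' + 1),
      (m + 1).choose (2 * j + 1) * w (m+1) (n' - j)
      = ∑ j ∈ Finset.range N,
        (m + 1).choose (2 * j + 1) * S m ((2:ℤ) ^ (m+1) * ((n' : ℤ) - j)) := by
    rw [show ∑ j ∈ Finset.range (n' + 1), (m + 1).choose (2 * j + 1) * w (m+1) (n' - j)
        = ∑ j ∈ Finset.range (n' + 1),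
          (m + 1).choose (2 * j + 1) * S m ((2:ℤ) ^ (m+1) * ((n' : ℤ) - j)) from
      Finset.sum_congr rfl (fun j hj => by
        rw [hterm j (by simpa [Nat.lt_succ_iff] using Finset.mem_range.mp hj)])]
    apply Finset.sum_subset
    · exact Finset.range_subset_range.mpr (le_max_left _ _)
    · intro j _ hj
      rw [Finset.mem_range, not_lt] at hj
      rw [hterm0 j (by omega), mul_zero]
  rw [hL, hR0, hs1, ← hs2, w_succ m (2*n'+1), Finset.sum_range_succ,
    ← w_succ m (2*n'), w_odd m n']
end

section
/- Define S_m(n) = Σ_{k=0}^{n/2^{m+1}} r_{m-1}(2^m·k) for m ≥ 1 and n ≡ 0 (mod 2^{m+1}). Then for every integer n' ≥ 1, S_m(2^{m+2}·n') = S_m(2^{m+2}·n' − 2^{m+1}) + Σ_{j=0}^{⌊(m+1)/2⌋} C(m+1, 2j) · S_m((2^{m+2}·n' − 2j·2^{m+1})/2). -/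
open Finsupp Finset

noncomputable section

def succEmb : ℕ ↪ ℕ := ⟨Nat.succ, Nat.succ_injective⟩

def tailF (α : ℕ →₀ ℕ) : ℕ →₀ ℕ := α.comapDomain Nat.succ Nat.succ_injective.injOn

def consF (a : ℕ) (β : ℕ →₀ ℕ) : ℕ →₀ ℕ := Finsupp.single 0 a + β.embDomain succEmb

lemma tailF_apply (α : ℕ →₀ ℕ) (i : ℕ) : tailF α i = α (i + 1) := rfl

lemma consF_zero (a : ℕ) (β : ℕ →₀ ℕ) : consF a β 0 = a := by
  simp [consF, Finsupp.embDomain_notin_range, succEmb]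

lemma consF_succ (a : ℕ) (β : ℕ →₀ ℕ) (i : ℕ) : consF a β (i + 1) = β i := by
  rw [consF, Finsupp.add_apply, Finsupp.single_apply, if_neg (by omega)]
  exact (zero_add _).trans (Finsupp.embDomain_apply_self succEmb β i)

lemma tailF_consF (a : ℕ) (β : ℕ →₀ ℕ) : tailF (consF a β) = β := by
  ext i; rw [tailF_apply, consF_succ]

lemma consF_tailF (α : ℕ →₀ ℕ) : consF (α 0) (tailF α) = α := by
  ext i
  cases i with
  | zero => rw [consF_zero]
  | succ n => rw [consF_succ, tailF_apply]

lemma binWeight_consF (a : ℕ) (β : ℕ →₀ ℕ) : binWeight (consF a β) = a + 2 * binWeight β := by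
  unfold binWeight consF
  rw [Finsupp.sum_add_index (by simp) (by intros; ring)]
  rw [Finsupp.sum_single_index (by simp), Finsupp.sum_embDomain]
  simp only [pow_zero, mul_one]
  congr 1
  rw [Finsupp.mul_sum]
  apply Finsupp.sum_congr
  intro i _
  show β i * 2 ^ (i + 1) = 2 * (β i * 2 ^ i)
  ring

lemma binWeight_eq (α : ℕ →₀ ℕ) : binWeight α = α 0 + 2 * binWeight (tailF α) := by
  conv_lhs => rw [← consF_tailF α]
  rw [binWeight_consF]

lemma binWeight_eq_zero {α : ℕ →₀ ℕ} (h : binWeight α = 0) : α = 0 := by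
  ext i
  by_cases hi : i ∈ α.support
  · have := Finset.sum_eq_zero_iff.mp h i hi
    simpa using this
  · simpa using Finsupp.notMem_support_iff.mp hi

lemma term_le (α : ℕ →₀ ℕ) (i : ℕ) : α i * 2 ^ i ≤ binWeight α := by
  by_cases hi : i ∈ α.support
  · exact Finset.single_le_sum (f := fun j => α j * 2 ^ j) (fun _ _ => Nat.zero_le _) hi
  · simp [Finsupp.notMem_support_iff.mp hi]

lemma apply_le (α : ℕ →₀ ℕ) (i : ℕ) : α i ≤ binWeight α :=
  le_trans (Nat.le_mul_of_pos_right _ (Nat.pow_pos (n := i) (by norm_num))) (term_le α i)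

lemma apply_eq_zero_of_big {α : ℕ →₀ ℕ} {n i : ℕ} (h : binWeight α = n) (hi : n < i) :
    α i = 0 := by
  by_contra hne
  have h1 : 2 ^ i ≤ α i * 2 ^ i := Nat.le_mul_of_pos_left _ (Nat.pos_of_ne_zero hne)
  have h2 := term_le α i
  have h3 : n < 2 ^ i := lt_of_lt_of_le hi (Nat.le_of_lt (Nat.lt_two_pow_self (n := i)))
  omega

lemma finite_U (n : ℕ) : Finite {α : ℕ →₀ ℕ // binWeight α = n} := by
  refine Finite.of_injective (fun x => fun i : Fin (n + 1) =>
    (⟨x.1 i, Nat.lt_succ_of_le (le_trans (apply_le x.1 i) (le_of_eq x.2))⟩ : Fin (n + 1))) ?_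
  rintro ⟨a, ha⟩ ⟨b, hb⟩ h
  refine Subtype.ext (Finsupp.ext fun i => ?_)
  rcases Nat.lt_or_ge i (n + 1) with hi | hi
  · have := congrFun h ⟨i, hi⟩
    simpa [Fin.ext_iff] using this
  · rw [apply_eq_zero_of_big ha (by omega), apply_eq_zero_of_big hb (by omega)]

lemma finite_sub (n : ℕ) (P : (ℕ →₀ ℕ) → Prop) :
    Finite {α : ℕ →₀ ℕ // binWeight α = n ∧ P α} := by
  have := finite_U n
  exact Finite.of_injective
    (fun x : {α : ℕ →₀ ℕ // binWeight α = n ∧ P α} =>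
      (⟨x.1, x.2.1⟩ : {α : ℕ →₀ ℕ // binWeight α = n}))
    (fun a b h => by cases a; cases b; simpa [Subtype.ext_iff] using h)

noncomputable def b (n : ℕ) : ℕ := Nat.card {α : ℕ →₀ ℕ // binWeight α = n}

lemma card_sigma_fin {n : ℕ} (D : ℕ → Type*) [∀ i : ℕ, Finite (D i)] :
    Nat.card ((i : Fin n) × D (i : ℕ)) = ∑ i ∈ Finset.range n, Nat.card (D i) := by
  have : ∀ i : ℕ, Fintype (D i) := fun i => Fintype.ofFinite _
  rw [Nat.card_eq_fintype_card, Fintype.card_sigma,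
    ← Fin.sum_univ_eq_sum_range (fun i => Nat.card (D i))]
  exact Finset.sum_congr rfl (fun i _ => Nat.card_eq_fintype_card.symm)

lemma card_fiber_sum {A : Type*} [Finite A] (f : A → ℕ) (n : ℕ) (hf : ∀ a, f a < n) :
    Nat.card A = ∑ w ∈ Finset.range n, Nat.card {a : A // f a = w} := by
  classical
  have : Fintype A := Fintype.ofFinite A
  rw [Nat.card_eq_fintype_card, ← Finset.card_univ]
  rw [Finset.card_eq_sum_card_fiberwise (f := f) (t := Finset.range n)
    (fun a _ => Finset.mem_range.mpr (hf a)) (s := Finset.univ)]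
  refine Finset.sum_congr rfl fun w _ => ?_
  rw [Nat.card_eq_fintype_card, Fintype.card_subtype]

lemma stripU (N : ℕ) :
    Nat.card {α : ℕ →₀ ℕ // binWeight α = N} =
      ∑ w ∈ Finset.range (N / 2 + 1), Nat.card {β : ℕ →₀ ℕ // binWeight β = w} := by
  have : Finite {α : ℕ →₀ ℕ // binWeight α = N} := finite_U N
  have hf : ∀ x : {α : ℕ →₀ ℕ // binWeight α = N}, binWeight (tailF x.1) < N / 2 + 1 := by
    rintro ⟨a, ha⟩
    show binWeight (tailF a) < N / 2 + 1
    have := binWeight_eq a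
    omega
  rw [card_fiber_sum _ _ hf]
  refine Finset.sum_congr rfl fun w hw => ?_
  have hw' : 2 * w ≤ N := by
    have := Finset.mem_range.mp hw; omega
  refine Nat.card_eq_of_bijective (fun y => ⟨tailF y.1.1, y.2⟩) ⟨?_, ?_⟩
  · rintro ⟨⟨a, ha⟩, ha2⟩ ⟨⟨c, hc⟩, hc2⟩ h
    simp only [Subtype.mk.injEq] at h ⊢
    have ea := binWeight_eq a
    have ec := binWeight_eq c
    rw [← consF_tailF a, ← consF_tailF c, h]
    have : a 0 = c 0 := by rw [h] at ea; omega
    rw [this]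
  · rintro ⟨β, hb⟩
    refine ⟨⟨⟨consF (N - 2 * w) β, ?_⟩, ?_⟩, ?_⟩
    · rw [binWeight_consF, hb]; omega
    · show binWeight (tailF (consF (N - 2 * w) β)) = w
      rw [tailF_consF, hb]
    · simp only [Subtype.mk.injEq]
      rw [tailF_consF]

lemma strip (s k : ℕ) (hs : 1 ≤ s) (Q : (ℕ →₀ ℕ) → Prop) :
    Nat.card {α : ℕ →₀ ℕ // binWeight α = 2 ^ s * k ∧ 2 ^ s ∣ α 0 ∧ Q (tailF α)} =
      ∑ c ∈ Finset.range (k + 1),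
        Nat.card {β : ℕ →₀ ℕ // binWeight β = 2 ^ (s - 1) * (k - c) ∧ Q β} := by
  have : Finite {α : ℕ →₀ ℕ // binWeight α = 2 ^ s * k ∧ 2 ^ s ∣ α 0 ∧ Q (tailF α)} :=
    finite_sub _ _
  set t := 2 ^ (s - 1) with ht
  have hpow : 2 ^ s = 2 * t := by
    rw [ht]
    conv_lhs => rw [show s = (s - 1) + 1 by omega]
    ring
  have hf : ∀ x : {α : ℕ →₀ ℕ // binWeight α = 2 ^ s * k ∧ 2 ^ s ∣ α 0 ∧ Q (tailF α)},
      x.1 0 / 2 ^ s < k + 1 := by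
    rintro ⟨a, ha, hd, hq⟩
    show a 0 / 2 ^ s < k + 1
    have h1 : a 0 ≤ 2 ^ s * k := le_trans (apply_le a 0) (le_of_eq ha)
    have := Nat.div_le_div_right (c := 2 ^ s) h1
    rw [Nat.mul_div_cancel_left _ (Nat.pow_pos (n := s) (by norm_num))] at this
    omega
  rw [card_fiber_sum _ _ hf]
  refine Finset.sum_congr rfl fun c hc => ?_
  have hck : c ≤ k := by have := Finset.mem_range.mp hc; omega
  have e2 : t * c ≤ t * k := Nat.mul_le_mul_left t hck
  have esub : t * (k - c) = t * k - t * c := Nat.mul_sub t k c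
  have key : ∀ a : ℕ →₀ ℕ, binWeight a = 2 ^ s * k → 2 ^ s ∣ a 0 → a 0 / 2 ^ s = c →
      a 0 = 2 ^ s * c ∧ binWeight (tailF a) = t * (k - c) := by
    intro a ha hd hdiv
    have h0 : a 0 = 2 ^ s * c := by
      rw [← hdiv, Nat.mul_div_cancel' hd]
    refine ⟨h0, ?_⟩
    have ha2 : a 0 + 2 * binWeight (tailF a) = 2 * (t * k) := by
      rw [← binWeight_eq a, ha, hpow]; ring
    have h02 : a 0 = 2 * (t * c) := by rw [h0, hpow]; ring
    rw [esub]
    generalize hA : t * k = A at ha2 e2 ⊢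
    generalize hB : t * c = B at h02 e2 ⊢
    omega
  refine Nat.card_eq_of_bijective
    (fun y => ⟨tailF y.1.1, (key y.1.1 y.1.2.1 y.1.2.2.1 y.2).2, y.1.2.2.2⟩) ⟨?_, ?_⟩
  · rintro ⟨⟨a, ha, hda, hqa⟩, ha2⟩ ⟨⟨a', ha', hda', hqa'⟩, ha2'⟩ h
    simp only [Subtype.mk.injEq] at h ⊢
    rw [← consF_tailF a, ← consF_tailF a', h,
      (key a ha hda ha2).1, (key a' ha' hda' ha2').1]
  · rintro ⟨β, hb, hq⟩
    have hwt : binWeight (consF (2 ^ s * c) β) = 2 ^ s * k := by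
      rw [binWeight_consF, hb, hpow, esub, mul_assoc, mul_assoc]
      generalize hA : t * k = A at e2 ⊢
      generalize hB : t * c = B at e2 ⊢
      omega
    have h0 : consF (2 ^ s * c) β 0 = 2 ^ s * c := consF_zero _ _
    refine ⟨⟨⟨consF (2 ^ s * c) β, hwt, ⟨c, h0⟩, by rw [tailF_consF]; exact hq⟩, ?_⟩, ?_⟩
    · show consF (2 ^ s * c) β 0 / 2 ^ s = c
      rw [h0, Nat.mul_div_cancel_left _ (Nat.pow_pos (n := s) (by norm_num))]
    · simp only [Subtype.mk.injEq]
      rw [tailF_consF]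

lemma r_eq_card (m N : ℕ) :
    r m (N : ℤ) =
      Nat.card {α : ℕ →₀ ℕ // binWeight α = N ∧ ∀ i ≤ m, 2 ^ (m + 1 - i) ∣ α i} := by
  unfold r Pm
  exact Nat.card_congr (Equiv.subtypeEquivRight fun α => by
    simp [Set.mem_setOf_eq, Nat.cast_inj])

lemma b_two_mul (n : ℕ) : b (2 * n) = ∑ w ∈ Finset.range (n + 1), b w := by
  have h := stripU (2 * n)
  rwa [Nat.mul_div_cancel_left _ (by norm_num : 0 < 2)] at h

lemma b_two_mul_add_one (n : ℕ) : b (2 * n + 1) = ∑ w ∈ Finset.range (n + 1), b w := by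
  have h := stripU (2 * n + 1)
  have : (2 * n + 1) / 2 = n := by omega
  rwa [this] at h

lemma r_zero_eq (k : ℕ) : r 0 ((2 * k : ℕ) : ℤ) = ∑ j ∈ Finset.range (k + 1), b j := by
  rw [r_eq_card]
  have h1 : Nat.card {α : ℕ →₀ ℕ // binWeight α = 2 * k ∧ ∀ i ≤ 0, 2 ^ (0 + 1 - i) ∣ α i} =
      Nat.card {α : ℕ →₀ ℕ // binWeight α = 2 ^ 1 * k ∧ 2 ^ 1 ∣ α 0 ∧
        (fun _ : ℕ →₀ ℕ => True) (tailF α)} := by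
    apply Nat.card_congr (Equiv.subtypeEquivRight fun α => ?_)
    constructor
    · rintro ⟨hw, hd⟩
      exact ⟨by simpa [pow_one] using hw, by simpa using hd 0 le_rfl, trivial⟩
    · rintro ⟨hw, hd, -⟩
      refine ⟨by simpa [pow_one] using hw, ?_⟩
      intro i hi
      interval_cases i
      simpa using hd
  rw [h1, strip 1 k le_rfl (fun _ => True)]
  have h2 : ∀ c, Nat.card {β : ℕ →₀ ℕ // binWeight β = 2 ^ (1 - 1) * (k - c) ∧
      (fun _ : ℕ →₀ ℕ => True) β} = b (k - c) := by
    intro c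
    unfold b
    exact Nat.card_congr (Equiv.subtypeEquivRight fun β => by simp)
  calc ∑ c ∈ Finset.range (k + 1), Nat.card {β : ℕ →₀ ℕ //
          binWeight β = 2 ^ (1 - 1) * (k - c) ∧ (fun _ : ℕ →₀ ℕ => True) β}
      = ∑ c ∈ Finset.range (k + 1), b (k - c) := Finset.sum_congr rfl fun c _ => h2 c
    _ = ∑ j ∈ Finset.range (k + 1), b j := by
        have := Finset.sum_range_reflect (fun j => b j) (k + 1)
        simpa using this

lemma r_step (m k : ℕ) (hm : 1 ≤ m) :
    r m ((2 ^ (m + 1) * k : ℕ) : ℤ) =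
      ∑ c ∈ Finset.range (k + 1), r (m - 1) ((2 ^ m * (k - c) : ℕ) : ℤ) := by
  rw [r_eq_card]
  have h1 : Nat.card {α : ℕ →₀ ℕ //
        binWeight α = 2 ^ (m + 1) * k ∧ ∀ i ≤ m, 2 ^ (m + 1 - i) ∣ α i} =
      Nat.card {α : ℕ →₀ ℕ // binWeight α = 2 ^ (m + 1) * k ∧ 2 ^ (m + 1) ∣ α 0 ∧
        (fun β : ℕ →₀ ℕ => ∀ i ≤ m - 1, 2 ^ (m - i) ∣ β i) (tailF α)} := by
    apply Nat.card_congr (Equiv.subtypeEquivRight fun α => ?_)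
    constructor
    · rintro ⟨hw, hd⟩
      refine ⟨hw, by simpa using hd 0 (Nat.zero_le m), ?_⟩
      intro i hi
      rw [tailF_apply]
      have h := hd (i + 1) (by omega)
      rwa [show m + 1 - (i + 1) = m - i by omega] at h
    · rintro ⟨hw, h0, ht⟩
      refine ⟨hw, ?_⟩
      intro i hi
      cases i with
      | zero => simpa using h0
      | succ i =>
        have h := ht i (by omega)
        rw [tailF_apply] at h
        rwa [show m + 1 - (i + 1) = m - i by omega]
  rw [h1, strip (m + 1) k (by omega) (fun β : ℕ →₀ ℕ => ∀ i ≤ m - 1, 2 ^ (m - i) ∣ β i)]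
  refine Finset.sum_congr rfl fun c _ => ?_
  rw [r_eq_card]
  apply (Nat.card_congr (Equiv.subtypeEquivRight fun β => ?_)).symm
  have e1 : m + 1 - 1 = m := by omega
  rw [e1]
  constructor
  · rintro ⟨hw, hd⟩
    refine ⟨hw, fun i hi => ?_⟩
    have h := hd i hi
    rwa [show m - 1 + 1 - i = m - i by omega] at h
  · rintro ⟨hw, hd⟩
    refine ⟨hw, fun i hi => ?_⟩
    have h := hd i hi
    rwa [show m - 1 + 1 - i = m - i by omega]

noncomputable def PS (f : ℤ → ℕ) : ℤ → ℕ := fun x =>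
  if 0 ≤ x then ∑ k ∈ Finset.range (x.toNat + 1), f (k : ℤ) else 0

noncomputable def bz : ℤ → ℕ := fun x => if 0 ≤ x then b x.toNat else 0

noncomputable def Gz : ℕ → ℤ → ℕ := fun p => PS^[p] bz

lemma Gz_succ (p : ℕ) : Gz (p + 1) = PS (Gz p) := by
  unfold Gz
  rw [Function.iterate_succ_apply']

lemma Gz_neg (p : ℕ) {x : ℤ} (hx : x < 0) : Gz p x = 0 := by
  cases p with
  | zero => exact if_neg (by omega)
  | succ p => rw [Gz_succ]; exact if_neg (by omega)

lemma bz_natCast (n : ℕ) : bz (n : ℤ) = b n := by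
  unfold bz
  rw [if_pos (by positivity), Int.toNat_natCast]

lemma PS_natCast (f : ℤ → ℕ) (n : ℕ) :
    PS f (n : ℤ) = ∑ k ∈ Finset.range (n + 1), f (k : ℤ) := by
  unfold PS
  rw [if_pos (by positivity), Int.toNat_natCast]

lemma Gz_natCast_succ (p : ℕ) (n : ℕ) :
    Gz (p + 1) (n : ℤ) = ∑ k ∈ Finset.range (n + 1), Gz p (k : ℤ) := by
  rw [Gz_succ, PS_natCast]

lemma PS_succ (f : ℤ → ℕ) {x : ℤ} (hx : -1 ≤ x) : PS f (x + 1) = PS f x + f (x + 1) := by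
  rcases eq_or_lt_of_le hx with h | h
  · rw [← h]
    norm_num
    unfold PS
    rw [if_pos le_rfl, if_neg (by omega)]
    simp
  · have h0 : 0 ≤ x := by omega
    unfold PS
    rw [if_pos (by omega), if_pos h0, show (x + 1).toNat = x.toNat + 1 by omega,
      Finset.sum_range_succ]
    congr 2
    omega

lemma PS_shift (f : ℤ → ℕ) (hf : ∀ x : ℤ, x < 0 → f x = 0) (j : ℕ) :
    ∀ n : ℕ, ∑ a ∈ Finset.range (n + 1), f ((a : ℤ) - j) = PS f ((n : ℤ) - j) := by
  intro n
  induction n with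
  | zero =>
    rcases Nat.eq_zero_or_pos j with h | h
    · subst h
      simp only [Nat.cast_zero, sub_zero, Finset.sum_range_one]
      unfold PS
      simp
    · rw [Finset.sum_range_one, hf _ (by push_cast; omega)]
      unfold PS
      rw [if_neg (by push_cast; omega)]
  | succ n ih =>
    rw [Finset.sum_range_succ, ih]
    rcases le_or_gt (j : ℤ) ((n : ℤ) + 1) with h | h
    · have := PS_succ f (x := (n : ℤ) - j) (by omega)
      rw [show ((n : ℤ) - j) + 1 = ((n : ℕ) + 1 : ℤ) - j by ring] at this
      rw [show ((n + 1 : ℕ) : ℤ) = ((n : ℤ) + 1) by push_cast; ring]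
      rw [this]
    · rw [hf _ (by push_cast; omega)]
      unfold PS
      rw [if_neg (by push_cast; omega), if_neg (by push_cast; omega)]

lemma Gz_shift (p : ℕ) (j n : ℕ) :
    ∑ a ∈ Finset.range (n + 1), Gz p ((a : ℤ) - j) = Gz (p + 1) ((n : ℤ) - j) := by
  rw [Gz_succ]
  exact PS_shift _ (fun x hx => Gz_neg p hx) j n

lemma Gz_shift' (p : ℕ) (j n : ℕ) :
    ∑ a ∈ Finset.range n, Gz p ((a : ℤ) - j) = Gz (p + 1) ((n : ℤ) - 1 - j) := by
  cases n with
  | zero =>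
    simp only [Finset.sum_range_zero]
    exact (Gz_neg _ (by omega)).symm
  | succ n =>
    have := Gz_shift p j n
    rwa [show ((n + 1 : ℕ) : ℤ) - 1 - j = (n : ℤ) - j by push_cast; ring]

lemma sum_range_even_odd (f : ℕ → ℕ) (n : ℕ) :
    ∑ k ∈ Finset.range (2 * n + 1), f k =
      ∑ a ∈ Finset.range (n + 1), f (2 * a) + ∑ a ∈ Finset.range n, f (2 * a + 1) := by
  induction n with
  | zero => simp
  | succ n ih =>
    have hR1 : ∑ a ∈ Finset.range (n + 1 + 1), f (2 * a) =
        ∑ a ∈ Finset.range (n + 1), f (2 * a) + f (2 * (n + 1)) := Finset.sum_range_succ _ _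
    have hR2 : ∑ a ∈ Finset.range (n + 1), f (2 * a + 1) =
        ∑ a ∈ Finset.range n, f (2 * a + 1) + f (2 * n + 1) := Finset.sum_range_succ _ _
    rw [show 2 * (n + 1) + 1 = (2 * n + 1) + 1 + 1 by ring, Finset.sum_range_succ,
      Finset.sum_range_succ, ih, hR1, hR2, show 2 * n + 1 + 1 = 2 * (n + 1) by ring]
    ring

lemma sum_range_even_odd' (f : ℕ → ℕ) (n : ℕ) :
    ∑ k ∈ Finset.range (2 * n + 2), f k =
      ∑ a ∈ Finset.range (n + 1), f (2 * a) + ∑ a ∈ Finset.range (n + 1), f (2 * a + 1) := by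
  rw [show 2 * n + 2 = (2 * n + 1) + 1 by ring, Finset.sum_range_succ, sum_range_even_odd,
    Finset.sum_range_succ (fun a => f (2 * a + 1))]
  ring

lemma r_eq_Gz (m : ℕ) : ∀ k : ℕ, r m ((2 ^ (m + 1) * k : ℕ) : ℤ) = Gz (m + 1) (k : ℤ) := by
  induction m with
  | zero =>
    intro k
    have h := r_zero_eq k
    rw [show 2 ^ (0 + 1) * k = 2 * k by ring, h, Gz_natCast_succ]
    exact (Finset.sum_congr rfl fun w _ => bz_natCast w).symm
  | succ m ih =>
    intro k
    rw [r_step (m + 1) k (by omega)]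
    simp only [Nat.add_sub_cancel]
    calc ∑ c ∈ Finset.range (k + 1), r m ((2 ^ (m + 1) * (k - c) : ℕ) : ℤ)
        = ∑ c ∈ Finset.range (k + 1), Gz (m + 1) ((k - c : ℕ) : ℤ) :=
          Finset.sum_congr rfl fun c _ => ih (k - c)
      _ = ∑ j ∈ Finset.range (k + 1), Gz (m + 1) ((j : ℕ) : ℤ) := by
          have := Finset.sum_range_reflect (fun j => Gz (m + 1) ((j : ℕ) : ℤ)) (k + 1)
          simpa using this
      _ = Gz (m + 2) (k : ℤ) := (Gz_natCast_succ (m + 1) k).symm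

lemma Gz_one_natCast (n : ℕ) : Gz 1 (n : ℤ) = ∑ w ∈ Finset.range (n + 1), b w := by
  rw [Gz_natCast_succ]
  exact Finset.sum_congr rfl fun w _ => bz_natCast w

lemma ident (p : ℕ) :
    (∀ n : ℕ, Gz p (2 * (n : ℤ)) =
      ∑ j ∈ Finset.range (p + 2), (p + 1).choose (2 * j) * Gz (p + 1) ((n : ℤ) - j)) ∧
    (∀ n : ℕ, Gz p (2 * (n : ℤ) + 1) =
      ∑ j ∈ Finset.range (p + 2), (p + 1).choose (2 * j + 1) * Gz (p + 1) ((n : ℤ) - j)) := by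
  induction p with
  | zero =>
    have hGz0 : Gz 0 = bz := rfl
    constructor <;> intro n
    · have hR : ∑ j ∈ Finset.range (0 + 2), (0 + 1).choose (2 * j) * Gz (0 + 1) ((n : ℤ) - j)
          = Gz 1 (n : ℤ) := by
        rw [show (0 : ℕ) + 2 = 1 + 1 from rfl,
          Finset.sum_range_succ, Finset.sum_range_one]
        rw [show Nat.choose (0 + 1) (2 * 0) = 1 from rfl,
          show Nat.choose (0 + 1) (2 * 1) = 0 from rfl]
        simp
      rw [hR, Gz_one_natCast, show (2 * (n : ℤ)) = ((2 * n : ℕ) : ℤ) by push_cast; ring,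
        hGz0, bz_natCast, b_two_mul]
    · have hR : ∑ j ∈ Finset.range (0 + 2), (0 + 1).choose (2 * j + 1) * Gz (0 + 1) ((n : ℤ) - j)
          = Gz 1 (n : ℤ) := by
        rw [show (0 : ℕ) + 2 = 1 + 1 from rfl,
          Finset.sum_range_succ, Finset.sum_range_one]
        rw [show Nat.choose (0 + 1) (2 * 0 + 1) = 1 from rfl,
          show Nat.choose (0 + 1) (2 * 1 + 1) = 0 from rfl]
        simp
      rw [hR, Gz_one_natCast, show (2 * (n : ℤ) + 1) = ((2 * n + 1 : ℕ) : ℤ) by push_cast; ring,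
        hGz0, bz_natCast, b_two_mul_add_one]
  | succ p ih =>
    obtain ⟨ihE, ihO⟩ := ih
    have e1 : ∀ n : ℕ, ∑ a ∈ Finset.range (n + 1), Gz p ((2 * a : ℕ) : ℤ) =
        ∑ j ∈ Finset.range (p + 2), (p + 1).choose (2 * j) * Gz (p + 2) ((n : ℤ) - j) := by
      intro n
      calc ∑ a ∈ Finset.range (n + 1), Gz p ((2 * a : ℕ) : ℤ)
          = ∑ a ∈ Finset.range (n + 1), ∑ j ∈ Finset.range (p + 2),
              (p + 1).choose (2 * j) * Gz (p + 1) ((a : ℤ) - j) := by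
            refine Finset.sum_congr rfl fun a _ => ?_
            rw [show ((2 * a : ℕ) : ℤ) = 2 * (a : ℤ) by push_cast; ring]
            exact ihE a
        _ = ∑ j ∈ Finset.range (p + 2), ∑ a ∈ Finset.range (n + 1),
              (p + 1).choose (2 * j) * Gz (p + 1) ((a : ℤ) - j) := Finset.sum_comm
        _ = ∑ j ∈ Finset.range (p + 2), (p + 1).choose (2 * j) * Gz (p + 2) ((n : ℤ) - j) := by
            refine Finset.sum_congr rfl fun j _ => ?_
            rw [← Finset.mul_sum, Gz_shift]
    have e2 : ∀ n : ℕ, ∑ a ∈ Finset.range n, Gz p ((2 * a + 1 : ℕ) : ℤ) =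
        ∑ j ∈ Finset.range (p + 2), (p + 1).choose (2 * j + 1) * Gz (p + 2) ((n : ℤ) - 1 - j) := by
      intro n
      calc ∑ a ∈ Finset.range n, Gz p ((2 * a + 1 : ℕ) : ℤ)
          = ∑ a ∈ Finset.range n, ∑ j ∈ Finset.range (p + 2),
              (p + 1).choose (2 * j + 1) * Gz (p + 1) ((a : ℤ) - j) := by
            refine Finset.sum_congr rfl fun a _ => ?_
            rw [show ((2 * a + 1 : ℕ) : ℤ) = 2 * (a : ℤ) + 1 by push_cast; ring]
            exact ihO a
        _ = ∑ j ∈ Finset.range (p + 2), ∑ a ∈ Finset.range n,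
              (p + 1).choose (2 * j + 1) * Gz (p + 1) ((a : ℤ) - j) := Finset.sum_comm
        _ = ∑ j ∈ Finset.range (p + 2),
              (p + 1).choose (2 * j + 1) * Gz (p + 2) ((n : ℤ) - 1 - j) := by
            refine Finset.sum_congr rfl fun j _ => ?_
            rw [← Finset.mul_sum, Gz_shift']
    constructor <;> intro n
    · -- even case
      have hL : Gz (p + 1) (2 * (n : ℤ)) = ∑ k ∈ Finset.range (2 * n + 1), Gz p (k : ℤ) := by
        rw [show (2 * (n : ℤ)) = ((2 * n : ℕ) : ℤ) by push_cast; ring, Gz_natCast_succ]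
      rw [hL, sum_range_even_odd (fun k => Gz p (k : ℤ)) n]
      have hsplit : ∑ a ∈ Finset.range (n + 1), Gz p ((2 * a : ℕ) : ℤ) +
          ∑ a ∈ Finset.range n, Gz p ((2 * a + 1 : ℕ) : ℤ) =
          ∑ j ∈ Finset.range (p + 2), (p + 1).choose (2 * j) * Gz (p + 2) ((n : ℤ) - j) +
          ∑ j ∈ Finset.range (p + 2),
            (p + 1).choose (2 * j + 1) * Gz (p + 2) ((n : ℤ) - 1 - j) := by
        rw [e1, e2]
      rw [hsplit]
      -- rework first sum: peel j = 0 and extend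
      have hA : ∑ j ∈ Finset.range (p + 2), (p + 1).choose (2 * j) * Gz (p + 2) ((n : ℤ) - j) =
          ∑ j ∈ Finset.range (p + 2),
            (p + 1).choose (2 * j + 2) * Gz (p + 2) ((n : ℤ) - 1 - j) + Gz (p + 2) (n : ℤ) := by
        rw [Finset.sum_range_succ' (fun j => (p + 1).choose (2 * j) * Gz (p + 2) ((n : ℤ) - j))]
        rw [Finset.sum_range_succ (fun j => (p + 1).choose (2 * j + 2) * Gz (p + 2) ((n : ℤ) - 1 - j))]
        rw [Nat.choose_eq_zero_of_lt (show p + 1 < 2 * (p + 1) + 2 by omega), zero_mul, add_zero]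
        simp only [mul_zero, Nat.choose_zero_right, Nat.cast_zero, sub_zero, one_mul]
        congr 1
        refine Finset.sum_congr rfl fun j _ => ?_
        rw [show 2 * (j + 1) = 2 * j + 2 by ring,
          show ((n : ℤ) - (j + 1 : ℕ)) = (n : ℤ) - 1 - j by push_cast; ring]
      rw [hA]
      -- right-hand side
      rw [Finset.sum_range_succ'
        (fun j => (p + 2).choose (2 * j) * Gz (p + 2) ((n : ℤ) - j)) (p + 2)]
      have hB : ∀ j, (p + 2).choose (2 * (j + 1)) =
          (p + 1).choose (2 * j + 1) + (p + 1).choose (2 * j + 2) := by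
        intro j
        rw [show 2 * (j + 1) = (2 * j + 1) + 1 by ring]
        exact Nat.choose_succ_succ (p + 1) (2 * j + 1)
      have hC : ∑ j ∈ Finset.range (p + 2),
          (p + 2).choose (2 * (j + 1)) * Gz (p + 2) ((n : ℤ) - (j + 1 : ℕ)) =
          ∑ j ∈ Finset.range (p + 2),
            ((p + 1).choose (2 * j + 1) * Gz (p + 2) ((n : ℤ) - 1 - j) +
             (p + 1).choose (2 * j + 2) * Gz (p + 2) ((n : ℤ) - 1 - j)) := by
        refine Finset.sum_congr rfl fun j _ => ?_
        rw [hB j, add_mul, show ((n : ℤ) - (j + 1 : ℕ)) = (n : ℤ) - 1 - j by push_cast; ring]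
      rw [hC, Finset.sum_add_distrib]
      simp only [mul_zero, Nat.choose_zero_right, Nat.cast_zero, sub_zero, one_mul]
      ring
    · -- odd case
      have hL : Gz (p + 1) (2 * (n : ℤ) + 1) = ∑ k ∈ Finset.range (2 * n + 2), Gz p (k : ℤ) := by
        rw [show (2 * (n : ℤ) + 1) = ((2 * n + 1 : ℕ) : ℤ) by push_cast; ring, Gz_natCast_succ]
      rw [hL, sum_range_even_odd' (fun k => Gz p (k : ℤ)) n]
      have e2' : ∑ a ∈ Finset.range (n + 1), Gz p ((2 * a + 1 : ℕ) : ℤ) =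
          ∑ j ∈ Finset.range (p + 2), (p + 1).choose (2 * j + 1) * Gz (p + 2) ((n : ℤ) - j) := by
        have := e2 (n + 1)
        rw [this]
        refine Finset.sum_congr rfl fun j _ => ?_
        rw [show ((n + 1 : ℕ) : ℤ) - 1 - j = (n : ℤ) - j by push_cast; ring]
      rw [e1 n, e2']
      rw [Finset.sum_range_succ
        (fun j => (p + 2).choose (2 * j + 1) * Gz (p + 2) ((n : ℤ) - j)) (p + 2)]
      rw [Nat.choose_eq_zero_of_lt (show p + 2 < 2 * (p + 2) + 1 by omega), zero_mul, add_zero]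
      have hC : ∑ j ∈ Finset.range (p + 2),
          (p + 2).choose (2 * j + 1) * Gz (p + 2) ((n : ℤ) - j) =
          ∑ j ∈ Finset.range (p + 2),
            ((p + 1).choose (2 * j) * Gz (p + 2) ((n : ℤ) - j) +
             (p + 1).choose (2 * j + 1) * Gz (p + 2) ((n : ℤ) - j)) := by
        refine Finset.sum_congr rfl fun j _ => ?_
        rw [Nat.choose_succ_succ (p + 1) (2 * j), add_mul]
      rw [hC, Finset.sum_add_distrib]

lemma S_eq (m : ℕ) (hm : 1 ≤ m) (t : ℤ) : S m (2 ^ (m + 1) * t) = Gz (m + 1) t := by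
  by_cases ht : 0 ≤ t
  · unfold S
    rw [if_pos ⟨by positivity, dvd_mul_right _ _⟩,
      Int.mul_ediv_cancel_left _ (by positivity)]
    have hsum : ∀ k : ℕ, r (m - 1) (2 ^ m * (k : ℤ)) = Gz m (k : ℤ) := by
      intro k
      have h := r_eq_Gz (m - 1) k
      rw [show m - 1 + 1 = m by omega] at h
      rwa [show ((2 ^ m * k : ℕ) : ℤ) = 2 ^ m * (k : ℤ) by push_cast; ring] at h
    calc ∑ k ∈ Finset.range (t.toNat + 1), r (m - 1) (2 ^ m * (k : ℤ))
        = ∑ k ∈ Finset.range (t.toNat + 1), Gz m (k : ℤ) :=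
          Finset.sum_congr rfl fun k _ => hsum k
      _ = Gz (m + 1) ((t.toNat : ℕ) : ℤ) := (Gz_natCast_succ m t.toNat).symm
      _ = Gz (m + 1) t := by rw [Int.toNat_of_nonneg ht]
  · unfold S
    rw [if_neg, Gz_neg _ (by omega)]
    rintro ⟨h0, -⟩
    have hp : (0 : ℤ) < 2 ^ (m + 1) := by positivity
    nlinarith [hp, h0]


theorem stmt18 (m : ℕ) (hm : 1 ≤ m) (n' : ℕ) (hn' : 1 ≤ n') :
    S m (2 ^ (m + 2) * n') =
      S m (2 ^ (m + 2) * (n' : ℤ) - 2 ^ (m + 1)) +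
        ∑ j ∈ Finset.range ((m + 1) / 2 + 1),
          (m + 1).choose (2 * j) *
            S m ((2 ^ (m + 2) * (n' : ℤ) - 2 * j * 2 ^ (m + 1)) / 2) := by
  have hL : S m (2 ^ (m + 2) * (n' : ℤ)) = Gz (m + 1) (2 * (n' : ℤ)) := by
    rw [show (2 : ℤ) ^ (m + 2) * (n' : ℤ) = 2 ^ (m + 1) * (2 * (n' : ℤ)) by ring, S_eq m hm]
  have hT1 : S m (2 ^ (m + 2) * (n' : ℤ) - 2 ^ (m + 1)) = Gz (m + 1) (2 * (n' : ℤ) - 1) := by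
    rw [show (2 : ℤ) ^ (m + 2) * (n' : ℤ) - 2 ^ (m + 1) =
      2 ^ (m + 1) * (2 * (n' : ℤ) - 1) by ring, S_eq m hm]
  have hT2 : ∀ j : ℕ, S m ((2 ^ (m + 2) * (n' : ℤ) - 2 * j * 2 ^ (m + 1)) / 2) =
      Gz (m + 1) ((n' : ℤ) - j) := by
    intro j
    rw [show (2 : ℤ) ^ (m + 2) * (n' : ℤ) - 2 * j * 2 ^ (m + 1) =
      2 * (2 ^ (m + 1) * ((n' : ℤ) - j)) by ring,
      Int.mul_ediv_cancel_left _ two_ne_zero, S_eq m hm]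
  rw [hL, hT1]
  have hsum : ∑ j ∈ Finset.range ((m + 1) / 2 + 1),
      (m + 1).choose (2 * j) * S m ((2 ^ (m + 2) * (n' : ℤ) - 2 * j * 2 ^ (m + 1)) / 2) =
      ∑ j ∈ Finset.range ((m + 1) / 2 + 1),
        (m + 1).choose (2 * j) * Gz (m + 1) ((n' : ℤ) - j) :=
    Finset.sum_congr rfl fun j _ => by rw [hT2 j]
  rw [hsum]
  have hext : ∑ j ∈ Finset.range ((m + 1) / 2 + 1),
      (m + 1).choose (2 * j) * Gz (m + 1) ((n' : ℤ) - j) =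
      ∑ j ∈ Finset.range (m + 2), (m + 1).choose (2 * j) * Gz (m + 1) ((n' : ℤ) - j) := by
    refine Finset.sum_subset (Finset.range_subset_range.mpr (by omega)) ?_
    intro x _ hx
    rw [Finset.mem_range, not_lt] at hx
    rw [Nat.choose_eq_zero_of_lt (by omega), zero_mul]
  rw [hext, ← (ident m).1 n']
  have hstep := PS_succ (Gz m) (x := 2 * (n' : ℤ) - 1) (by omega)
  rw [show 2 * (n' : ℤ) - 1 + 1 = 2 * (n' : ℤ) by ring] at hstep
  rw [← Gz_succ] at hstep
  omega
end
end
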